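/- For every n ≥ 3, the graph K_{n,n} minus a perfect matching has no b-coloring with k colors for any 2 < k < n; in particular, for n ≥ 4 this graph is not b-continuous. -/

import Mathlib

def IsBVertex {V : Type*} (G : SimpleGraph V) {k : ℕ} (ψ : V → Fin k) (u : V) : Prop :=
  ∀ c : Fin k, c ≠ ψ u → ∃ v, G.Adj u v ∧ ψ v = c

def IsBColoring {V : Type*} (G : SimpleGraph V) (k : ℕ) (ψ : V → Fin k) : Prop :=
  (∀ u v, G.Adj u v → ψ u ≠ ψ v) ∧ ∀ c : Fin k, ∃ u, ψ u = c ∧ IsBVertex G ψ u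

noncomputable def bChromaticNumber {V : Type*} [Fintype V] (G : SimpleGraph V) : ℕ :=
  sSup {k | ∃ ψ : V → Fin k, IsBColoring G k ψ}

/-- `K_{n,n}` minus a perfect matching: `a i` is adjacent to `b j` iff `i ≠ j`. -/
def crownGraph (n : ℕ) : SimpleGraph (Fin n ⊕ Fin n) where
  Adj x y := ∃ i j : Fin n, i ≠ j ∧
    ((x = Sum.inl i ∧ y = Sum.inr j) ∨ (x = Sum.inr j ∧ y = Sum.inl i))
  symm := by
    constructor
    rintro x y ⟨i, j, hij, h | h⟩ <;> exact ⟨i, j, hij, by tauto⟩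
  loopless := by
    constructor
    rintro x ⟨i, j, hij, ⟨h1, h2⟩ | ⟨h1, h2⟩⟩ <;> simp_all

lemma crown_adj_inl_inr {n : ℕ} {i j : Fin n} :
    (crownGraph n).Adj (Sum.inl i) (Sum.inr j) ↔ i ≠ j := by
  constructor
  · rintro ⟨a, b, hab, ⟨h1, h2⟩ | ⟨h1, h2⟩⟩ <;> simp_all
  · intro h; exact ⟨i, j, h, Or.inl ⟨rfl, rfl⟩⟩

lemma crown_adj_inl {n : ℕ} {i : Fin n} {v} (h : (crownGraph n).Adj (Sum.inl i) v) :
    ∃ j : Fin n, v = Sum.inr j := by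
  obtain ⟨a, b, hab, ⟨h1, h2⟩ | ⟨h1, h2⟩⟩ := h
  · exact ⟨b, h2⟩
  · simp at h1

lemma crown_adj_inr {n : ℕ} {i : Fin n} {v} (h : (crownGraph n).Adj (Sum.inr i) v) :
    ∃ j : Fin n, v = Sum.inl j := by
  obtain ⟨a, b, hab, ⟨h1, h2⟩ | ⟨h1, h2⟩⟩ := h
  · simp at h1
  · exact ⟨a, h2⟩

lemma crown_adj_swap {n : ℕ} {x y : Fin n ⊕ Fin n} (h : (crownGraph n).Adj x y) :
    (crownGraph n).Adj (x.swap) (y.swap) := by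
  obtain ⟨a, b, hab, ⟨h1, h2⟩ | ⟨h1, h2⟩⟩ := h <;> subst h1 <;> subst h2
  · exact ⟨b, a, hab.symm, Or.inr ⟨rfl, rfl⟩⟩
  · exact ⟨b, a, hab.symm, Or.inl ⟨rfl, rfl⟩⟩

lemma swap_bcoloring {n k : ℕ} {ψ : Fin n ⊕ Fin n → Fin k}
    (hψ : IsBColoring (crownGraph n) k ψ) :
    IsBColoring (crownGraph n) k (ψ ∘ Sum.swap) := by
  obtain ⟨hprop, hb⟩ := hψ
  constructor
  · intro u v huv
    exact hprop _ _ (crown_adj_swap huv)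
  · intro c
    obtain ⟨u, hu, hbu⟩ := hb c
    refine ⟨u.swap, by simpa using hu, ?_⟩
    intro d hd
    simp only [Function.comp_apply, Sum.swap_swap] at hd ⊢
    obtain ⟨v, hv, hvc⟩ := hbu d hd
    exact ⟨v.swap, crown_adj_swap hv, by simpa using hvc⟩

/-- key: a color class meeting both sides is a diagonal pair -/
lemma pair_lemma {n k : ℕ} {ψ : Fin n ⊕ Fin n → Fin k}
    (hprop : ∀ u v, (crownGraph n).Adj u v → ψ u ≠ ψ v)
    {i j : Fin n} (h : ψ (Sum.inl i) = ψ (Sum.inr j)) : i = j := by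
  by_contra hij
  exact hprop _ _ (crown_adj_inl_inr.2 hij) h

/-- main lemma, for the case of a color appearing only on the left side -/
lemma no_bcol_aux {n k : ℕ} (hk2 : 2 < k) {ψ : Fin n ⊕ Fin n → Fin k}
    (hψ : IsBColoring (crownGraph n) k ψ)
    {c : Fin k} (hc : ∀ j, ψ (Sum.inr j) ≠ c) : False := by
  obtain ⟨hprop, hb⟩ := hψ
  obtain ⟨u, huc, hbu⟩ := hb c
  obtain i | i := u
  swap
  · exact hc i huc
  -- d := color of b_i
  set d := ψ (Sum.inr i) with hd
  have hdc : d ≠ c := hc i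
  have hdA : ∀ m, ψ (Sum.inl m) ≠ d := by
    intro m hm
    have := pair_lemma hprop (hm.trans hd)
    subst this
    rw [huc] at hm
    exact hdc hm.symm
  -- third color
  have hthird : ∃ e : Fin k, e ≠ c ∧ e ≠ d := by
    by_contra h
    push_neg at h
    have hsub : (Finset.univ : Finset (Fin k)) ⊆ {c, d} := by
      intro e _
      by_cases hec : e = c
      · simp [hec]
      · simp [h e hec]
    have h2 := Finset.card_le_card hsub
    have h3 : ({c, d} : Finset (Fin k)).card ≤ 2 :=
      (Finset.card_insert_le _ _).trans (by simp)
    rw [Finset.card_univ, Fintype.card_fin] at h2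
    omega
  obtain ⟨e, hec, hed⟩ := hthird
  obtain ⟨w, hwe, hbw⟩ := hb e
  obtain m | m := w
  · -- w = a_m : it must see color c among right neighbors, impossible
    obtain ⟨v, hv, hvc⟩ := hbw c (by rw [hwe]; exact hec.symm)
    obtain ⟨j, rfl⟩ := crown_adj_inl hv
    exact hc j hvc
  · -- w = b_m : it must see color d among left neighbors, impossible
    obtain ⟨v, hv, hvd⟩ := hbw d (by rw [hwe]; exact hed.symm)
    obtain ⟨j, rfl⟩ := crown_adj_inr hv
    exact hdA j hvd

lemma no_bcol {n k : ℕ} (hk2 : 2 < k) (hkn : k < n)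
    {ψ : Fin n ⊕ Fin n → Fin k} (hψ : IsBColoring (crownGraph n) k ψ) : False := by
  -- there's a one-sided color class
  have hone : ∃ c : Fin k, (∀ j, ψ (Sum.inr j) ≠ c) ∨ (∀ j, ψ (Sum.inl j) ≠ c) := by
    by_contra h
    push_neg at h
    -- every color appears on both sides ⇒ ψ ∘ inl injective
    have hinj : Function.Injective (fun j : Fin n => ψ (Sum.inl j)) := by
      intro a b hab
      obtain ⟨⟨j, hj⟩, -⟩ := h (ψ (Sum.inl a))
      simp only at hab
      have h1 := pair_lemma hψ.1 hj.symm
      have h2 := pair_lemma hψ.1 (show ψ (Sum.inl b) = ψ (Sum.inr j) from hab ▸ hj.symm)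
      omega
    have := Fintype.card_le_of_injective _ hinj
    simp at this
    omega
  obtain ⟨c, hc | hc⟩ := hone
  · exact no_bcol_aux hk2 hψ hc
  · exact no_bcol_aux hk2 (swap_bcoloring hψ) (fun j => by simpa using hc j)

theorem stmt15 (n : ℕ) (hn : 3 ≤ n) :
    (∀ k : ℕ, 2 < k → k < n →
      ¬ ∃ ψ : (Fin n ⊕ Fin n) → Fin k, IsBColoring (crownGraph n) k ψ) ∧
    (4 ≤ n → ¬ ∀ k : ℕ, (crownGraph n).chromaticNumber ≤ (k : ℕ∞) →
      k ≤ bChromaticNumber (crownGraph n) →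
      ∃ ψ : (Fin n ⊕ Fin n) → Fin k, IsBColoring (crownGraph n) k ψ) := by
  refine ⟨fun k hk2 hkn ⟨ψ, hψ⟩ => no_bcol hk2 hkn hψ, fun hn4 hcont => ?_⟩
  -- chromaticNumber ≤ 3
  have hcol : (crownGraph n).Colorable 3 := by
    refine ⟨⟨Sum.elim (fun _ => 0) (fun _ => 1), ?_⟩⟩
    rintro x y ⟨i, j, hij, ⟨rfl, rfl⟩ | ⟨rfl, rfl⟩⟩ <;> simp
  have hchrom : (crownGraph n).chromaticNumber ≤ (3 : ℕ∞) :=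
    hcol.chromaticNumber_le
  -- b-coloring with n colors
  have hbig : ∃ ψ : (Fin n ⊕ Fin n) → Fin n, IsBColoring (crownGraph n) n ψ := by
    refine ⟨Sum.elim id id, ?_, ?_⟩
    · rintro x y ⟨i, j, hij, ⟨rfl, rfl⟩ | ⟨rfl, rfl⟩⟩ <;> simp [hij, Ne.symm hij]
    · intro c
      refine ⟨Sum.inl c, rfl, fun d hd => ⟨Sum.inr d, ?_, rfl⟩⟩
      exact crown_adj_inl_inr.2 (by simpa using (Ne.symm hd))
  -- the set is bounded above
  have hbdd : BddAbove {k | ∃ ψ : (Fin n ⊕ Fin n) → Fin k, IsBColoring (crownGraph n) k ψ} := by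
    refine ⟨2 * n, fun k ⟨ψ, hψ⟩ => ?_⟩
    classical
    choose f hf using fun c => (hψ.2 c)
    have hinj : Function.Injective f := by
      intro a b hab
      rw [← (hf a).1, ← (hf b).1, hab]
    have := Fintype.card_le_of_injective _ hinj
    simpa [two_mul] using this
  have hble : (3 : ℕ) ≤ bChromaticNumber (crownGraph n) := by
    have hn' : n ≤ bChromaticNumber (crownGraph n) := le_csSup hbdd hbig
    omega
  obtain ⟨ψ, hψ⟩ := hcont 3 hchrom hble
  exact no_bcol (by norm_num) (by omega) hψ
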